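/- arXiv:2309.02011 — 5 statements merged into one kernel-verified Lean document; each statement's English description precedes it below -/
import Mathlib

section
/- Suppose the symmetric matrix f ∈ ℝ^{h×h} has at least one negative eigenvalue with most-negative eigenvalue λ_min and corresponding unit eigenvector v. Then under the constraint ‖W₂‖_F ≤ c, the minimum of Tr(W₂^⊤ f W₂) over W₂ ∈ ℝ^{h×z} equals c²λ_min, attained when W₂W₂^⊤ = c² v v^⊤, i.e. W₂ has a single nonzero column proportional to v (rank-one solution). -/
open Matrix

lemma quad_lower_bound {h : ℕ} (f : Matrix (Fin h) (Fin h) ℝ) (hf : f.IsSymm)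
    (lam : ℝ)
    (hmin : ∀ (μ : ℝ) (w : Fin h → ℝ), w ≠ 0 → f.mulVec w = μ • w → lam ≤ μ)
    (w : Fin h → ℝ) : lam * (w ⬝ᵥ w) ≤ w ⬝ᵥ f.mulVec w := by
  set g : Matrix (Fin h) (Fin h) ℝ := f - lam • 1 with hg
  have hgh : g.IsHermitian := by
    have : f.IsHermitian := by
      rwa [Matrix.IsHermitian, Matrix.conjTranspose_eq_transpose_of_trivial]
    rw [Matrix.IsHermitian, Matrix.conjTranspose_eq_transpose_of_trivial] at this ⊢
    simp [hg, Matrix.transpose_sub, this, Matrix.transpose_smul]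
  have hpsd : g.PosSemidef := by
    apply hgh.posSemidef_iff_eigenvalues_nonneg.mpr
    intro i
    have hev := hgh.mulVec_eigenvectorBasis i
    have hne : ⇑(hgh.eigenvectorBasis i) ≠ 0 := by
      have := hgh.eigenvectorBasis.orthonormal.ne_zero i
      intro hcontra
      apply this
      ext j
      exact congrFun hcontra j
    have hfe : f.mulVec ⇑(hgh.eigenvectorBasis i)
        = (hgh.eigenvalues i + lam) • ⇑(hgh.eigenvectorBasis i) := by
      have : g.mulVec ⇑(hgh.eigenvectorBasis i)
          = f.mulVec ⇑(hgh.eigenvectorBasis i) - lam • ⇑(hgh.eigenvectorBasis i) := by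
        simp [hg, Matrix.sub_mulVec, Matrix.smul_mulVec]
      rw [this] at hev
      rw [add_smul, ← hev]
      abel
    have := hmin _ _ hne hfe
    linarith [show (0 : Fin h → ℝ) i = 0 from rfl]
  have h0 := hpsd.dotProduct_mulVec_nonneg w
  have : (0:ℝ) ≤ w ⬝ᵥ g.mulVec w := by simpa using h0
  have hexp : w ⬝ᵥ g.mulVec w = w ⬝ᵥ f.mulVec w - lam * (w ⬝ᵥ w) := by
    simp [hg, Matrix.sub_mulVec, Matrix.smul_mulVec, dotProduct_sub,
      dotProduct_smul, smul_eq_mul]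
  linarith [hexp ▸ this]

lemma myTraceConj {h z : ℕ} (f : Matrix (Fin h) (Fin h) ℝ)
    (W : Matrix (Fin h) (Fin z) ℝ) :
    Matrix.trace (Wᵀ * f * W) = ∑ j, (fun i => W i j) ⬝ᵥ f.mulVec (fun i => W i j) := by
  simp only [Matrix.trace, Matrix.diag, Matrix.mul_apply, Matrix.transpose_apply,
    dotProduct, Matrix.mulVec, Finset.sum_mul, Finset.mul_sum]
  apply Finset.sum_congr rfl; intro j _
  rw [Finset.sum_comm]
  apply Finset.sum_congr rfl; intro i _
  apply Finset.sum_congr rfl; intro k _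
  ring

lemma trace_gram {h z : ℕ} (W : Matrix (Fin h) (Fin z) ℝ) :
    Matrix.trace (Wᵀ * W) = ∑ j, (fun i => W i j) ⬝ᵥ (fun i => W i j) := by
  simp [Matrix.trace, Matrix.diag, Matrix.mul_apply, dotProduct]

/-- If the symmetric `f` has most-negative eigenvalue `lam < 0` with unit
eigenvector `v`, then under the Frobenius norm constraint `‖W₂‖_F ≤ c` the
minimum of `Tr(W₂ᵀ f W₂)` is `c² lam`, attained at a rank-one `W₂` with
`W₂W₂ᵀ = c² v vᵀ`. -/
theorem stmt2 {h z : ℕ} (f : Matrix (Fin h) (Fin h) ℝ) (hf : f.IsSymm)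
    (lam : ℝ) (hneg : lam < 0) (v : Fin h → ℝ) (hv : v ⬝ᵥ v = 1)
    (heig : f.mulVec v = lam • v)
    (hmin : ∀ (μ : ℝ) (w : Fin h → ℝ), w ≠ 0 → f.mulVec w = μ • w → lam ≤ μ)
    (c : ℝ) (hc : 0 ≤ c) (hz : 0 < z) :
    IsLeast {r : ℝ | ∃ W₂ : Matrix (Fin h) (Fin z) ℝ,
        Matrix.trace (W₂ᵀ * W₂) ≤ c ^ 2 ∧ r = Matrix.trace (W₂ᵀ * f * W₂)}
      (c ^ 2 * lam) ∧
    ∃ W₂ : Matrix (Fin h) (Fin z) ℝ, Matrix.trace (W₂ᵀ * W₂) ≤ c ^ 2 ∧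
      W₂ * W₂ᵀ = c ^ 2 • vecMulVec v v ∧
      Matrix.trace (W₂ᵀ * f * W₂) = c ^ 2 * lam := by
  classical
  set j0 : Fin z := ⟨0, hz⟩
  set W : Matrix (Fin h) (Fin z) ℝ := Matrix.of fun i j => if j = j0 then c * v i else 0
    with hW
  have hcol : ∀ j, (fun i => W i j) = if j = j0 then c • v else 0 := by
    intro j
    by_cases hj : j = j0 <;> ext i <;> simp [hW, hj]
  have hWgram : Matrix.trace (Wᵀ * W) = c ^ 2 := by
    rw [trace_gram]
    rw [Finset.sum_eq_single j0]
    · simp only [hW, Matrix.of_apply, if_pos rfl, if_true, dotProduct]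
      rw [show ∑ i, c * v i * (c * v i) = c^2 * ∑ i, v i * v i by
        rw [Finset.mul_sum]; apply Finset.sum_congr rfl; intros; ring]
      rw [show (∑ i, v i * v i) = v ⬝ᵥ v from rfl, hv, mul_one]
    · intro b _ hb; simp [hcol, hb]
    · intro hb; exact absurd (Finset.mem_univ j0) hb
  have hWtr : Matrix.trace (Wᵀ * f * W) = c ^ 2 * lam := by
    rw [myTraceConj]
    rw [Finset.sum_eq_single j0]
    · rw [hcol]; simp only [if_pos rfl, if_true]
      rw [Matrix.mulVec_smul, heig, dotProduct_smul, dotProduct_smul, smul_dotProduct, hv]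
      simp [smul_eq_mul]; ring
    · intro b _ hb; rw [hcol]; simp [hb]
    · intro hb; exact absurd (Finset.mem_univ j0) hb
  refine ⟨⟨⟨W, hWgram.le, hWtr.symm⟩, ?_⟩, W, hWgram.le, ?_, hWtr⟩
  · rintro r ⟨M, hMle, rfl⟩
    rw [myTraceConj]
    have hbound : ∀ j : Fin z,
        lam * ((fun i => M i j) ⬝ᵥ (fun i => M i j))
          ≤ (fun i => M i j) ⬝ᵥ f.mulVec (fun i => M i j) :=
      fun j => quad_lower_bound f hf lam hmin _
    calc c ^ 2 * lam ≤ lam * ∑ j, (fun i => M i j) ⬝ᵥ (fun i => M i j) := by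
          rw [mul_comm]
          have : (∑ j, (fun i => M i j) ⬝ᵥ (fun i => M i j)) ≤ c ^ 2 := by
            rw [← trace_gram]; exact hMle
          exact mul_le_mul_of_nonpos_left this hneg.le
      _ = ∑ j, lam * ((fun i => M i j) ⬝ᵥ (fun i => M i j)) := by rw [Finset.mul_sum]
      _ ≤ ∑ j, (fun i => M i j) ⬝ᵥ f.mulVec (fun i => M i j) :=
          Finset.sum_le_sum fun j _ => hbound j
  · ext i k
    simp only [Matrix.mul_apply, Matrix.transpose_apply, hW, Matrix.of_apply,
      Matrix.smul_apply, Matrix.vecMulVec_apply, smul_eq_mul]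
    rw [Finset.sum_eq_single j0]
    · simp; ring
    · intro b _ hb; simp [hb]
    · intro hb; exact absurd (Finset.mem_univ j0) hb
end

section
/- Let W ∈ ℝ^{d×z} satisfy ‖W‖₂ ≤ 1 (operator norm), and let C ∈ ℝ^{d×d} be symmetric with l many strictly negative eigenvalues λ₁ ≤ ... ≤ λ_l < 0 and corresponding orthonormal eigenvectors c₁,...,c_l. Then the minimum of Tr(W^⊤ C W) over all W with ‖W‖₂ ≤ 1 equals Σ_{i=1}^{m} λᵢ where m = min{d, z, l}, and it is attained when WW^⊤ = Σ_{i=1}^{m} cᵢcᵢ^⊤, i.e. when all nonzero singular values of W equal 1 and its left singular vectors span the bottom-m eigenspace of C. -/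
open Matrix
open scoped Matrix.Norms.L2Operator


lemma dot_sq_norm {n : ℕ} (x : Fin n → ℝ) :
    ‖(EuclideanSpace.equiv (Fin n) ℝ).symm x‖ ^ 2 = x ⬝ᵥ x := by
  rw [EuclideanSpace.norm_eq, Real.sq_sqrt (by positivity)]
  simp [dotProduct, sq]

lemma mulVec_dot_le {a b : ℕ} (A : Matrix (Fin a) (Fin b) ℝ) (hA : ‖A‖ ≤ 1)
    (x : Fin b → ℝ) : (A *ᵥ x) ⬝ᵥ (A *ᵥ x) ≤ x ⬝ᵥ x := by
  rw [← dot_sq_norm, ← dot_sq_norm]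
  have h : ‖(EuclideanSpace.equiv (Fin a) ℝ).symm (A *ᵥ x)‖ ≤
      ‖A‖ * ‖(EuclideanSpace.equiv (Fin b) ℝ).symm x‖ :=
    A.l2_opNorm_mulVec ((EuclideanSpace.equiv (Fin b) ℝ).symm x)
  have hx : (0:ℝ) ≤ ‖(EuclideanSpace.equiv (Fin b) ℝ).symm x‖ := norm_nonneg _
  have h4 : ‖(EuclideanSpace.equiv (Fin a) ℝ).symm (A *ᵥ x)‖ ≤
      ‖(EuclideanSpace.equiv (Fin b) ℝ).symm x‖ := h.trans (by nlinarith)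
  exact pow_le_pow_left₀ (norm_nonneg _) h4 2

lemma norm_le_one_of {a b : ℕ} (A : Matrix (Fin a) (Fin b) ℝ)
    (h : ∀ x : Fin b → ℝ, (A *ᵥ x) ⬝ᵥ (A *ᵥ x) ≤ x ⬝ᵥ x) : ‖A‖ ≤ 1 := by
  rw [Matrix.l2_opNorm_def]
  refine ContinuousLinearMap.opNorm_le_bound _ zero_le_one fun x => ?_
  rw [one_mul]
  have hx : ((LinearEquiv.trans toEuclideanLin LinearMap.toContinuousLinearMap) A) x
      = (EuclideanSpace.equiv (Fin a) ℝ).symm (A *ᵥ (EuclideanSpace.equiv (Fin b) ℝ) x) := rfl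
  rw [hx]
  have h2 := h ((EuclideanSpace.equiv (Fin b) ℝ) x)
  rw [← dot_sq_norm, ← dot_sq_norm] at h2
  have h3 : ((EuclideanSpace.equiv (Fin b) ℝ).symm ((EuclideanSpace.equiv (Fin b) ℝ) x)) = x := by
    simp
  rw [h3] at h2
  nlinarith [norm_nonneg ((EuclideanSpace.equiv (Fin a) ℝ).symm
    (A *ᵥ (EuclideanSpace.equiv (Fin b) ℝ) x)), norm_nonneg x]

lemma norm_transpose {a b : ℕ} (A : Matrix (Fin a) (Fin b) ℝ) : ‖Aᵀ‖ = ‖A‖ := by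
  have : Aᵀ = Aᴴ := by ext i j; simp [conjTranspose_apply]
  rw [this, Matrix.l2_opNorm_conjTranspose]

lemma trace_sandwich {a b : ℕ} (W : Matrix (Fin a) (Fin b) ℝ) (u : Fin a → ℝ) :
    Matrix.trace (Wᵀ * vecMulVec u u * W) = (Wᵀ *ᵥ u) ⬝ᵥ (Wᵀ *ᵥ u) := by
  have h : Wᵀ * vecMulVec u u * W = vecMulVec (Wᵀ *ᵥ u) (Wᵀ *ᵥ u) := by
    ext k k'
    simp only [Matrix.mul_apply, vecMulVec_apply, mulVec, dotProduct, transpose_apply,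
      Finset.sum_mul, Finset.mul_sum]
    exact Finset.sum_congr rfl fun i _ => Finset.sum_congr rfl fun j _ => by ring
  rw [h, vecMulVec_eq (Fin 1), Matrix.trace_replicateCol_mul_replicateRow]

lemma dot_self_nonneg {n : ℕ} (x : Fin n → ℝ) : 0 ≤ x ⬝ᵥ x :=
  Finset.sum_nonneg fun i _ => mul_self_nonneg _

lemma card_filter_lt {d K : ℕ} (h : K ≤ d) :
    (Finset.univ.filter fun i : Fin d => (i : ℕ) < K).card = K := by
  have : (Finset.univ.filter fun i : Fin d => (i : ℕ) < K)
      = Finset.map (Fin.castLEEmb h) Finset.univ := by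
    ext i
    simp only [Finset.mem_filter, Finset.mem_univ, true_and, Finset.mem_map,
      Fin.castLEEmb_apply]
    constructor
    · intro hi; exact ⟨⟨i, hi⟩, rfl⟩
    · rintro ⟨j, -, rfl⟩; exact j.isLt
  rw [this, Finset.card_map, Finset.card_univ, Fintype.card_fin]


lemma card_filter_lt' {d K : ℕ} (h : K ≤ d) :
    (Finset.univ.filter fun i : Fin d => (i : ℕ) < K).card = K := by
  have : (Finset.univ.filter fun i : Fin d => (i : ℕ) < K)
      = Finset.map (Fin.castLEEmb h) Finset.univ := by
    ext i
    simp only [Finset.mem_filter, Finset.mem_univ, true_and, Finset.mem_map,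
      Fin.castLEEmb_apply]
    constructor
    · intro hi; exact ⟨⟨i, hi⟩, rfl⟩
    · rintro ⟨j, -, rfl⟩; exact j.isLt
  rw [this, Finset.card_map, Finset.card_univ, Fintype.card_fin]

lemma negpos {d l : ℕ} (lam : Fin d → ℝ) (hmono : Monotone lam)
    (hl : l = (Finset.univ.filter fun i : Fin d => lam i < 0).card) :
    (∀ i : Fin d, (i : ℕ) < l → lam i < 0) ∧ (∀ i : Fin d, l ≤ (i : ℕ) → 0 ≤ lam i) := by
  constructor
  · intro i hi
    by_contra hpos
    push_neg at hpos
    have hsub : (Finset.univ.filter fun j : Fin d => lam j < 0) ⊆ Finset.Iio i := by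
      intro j hj
      simp only [Finset.mem_filter, Finset.mem_univ, true_and] at hj
      simp only [Finset.mem_Iio]
      by_contra hji
      push_neg at hji
      exact absurd (le_trans hpos (hmono hji)) (not_le.mpr hj)
    have hc := Finset.card_le_card hsub
    rw [Fin.card_Iio] at hc
    omega
  · intro i hi
    by_contra hneg
    push_neg at hneg
    have hsub : Finset.Iic i ⊆ (Finset.univ.filter fun j : Fin d => lam j < 0) := by
      intro j hj
      simp only [Finset.mem_Iic] at hj
      simp only [Finset.mem_filter, Finset.mem_univ, true_and]
      exact lt_of_le_of_lt (hmono hj) hneg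
    have hc := Finset.card_le_card hsub
    rw [Fin.card_Iic] at hc
    omega

lemma key {d : ℕ} (lam t : Fin d → ℝ) (hmono : Monotone lam)
    (ht0 : ∀ i, 0 ≤ t i) (ht1 : ∀ i, t i ≤ 1)
    (K l m : ℕ) (hld : l ≤ d)
    (htK : ∑ i, t i ≤ K)
    (hneg : ∀ i : Fin d, (i : ℕ) < l → lam i < 0)
    (hpos : ∀ i : Fin d, l ≤ (i : ℕ) → 0 ≤ lam i)
    (hm : m = min K l) :
    ∑ i ∈ Finset.univ.filter (fun i : Fin d => (i : ℕ) < m), lam i ≤ ∑ i, lam i * t i := by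
  subst hm
  have hstep : ∑ i ∈ Finset.univ.filter (fun i : Fin d => (i : ℕ) < l), lam i * t i
      ≤ ∑ i, lam i * t i := by
    apply Finset.sum_le_sum_of_subset_of_nonneg (Finset.filter_subset _ _)
    intro i _ hi
    simp only [Finset.mem_filter, Finset.mem_univ, true_and, not_lt] at hi
    exact mul_nonneg (hpos i hi) (ht0 i)
  refine le_trans ?_ hstep
  rcases le_or_gt l K with h | h
  · rw [min_eq_right h]
    apply Finset.sum_le_sum
    intro i hi
    simp only [Finset.mem_filter, Finset.mem_univ, true_and] at hi
    have h1 : lam i < 0 := hneg i hi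
    nlinarith [ht1 i, ht0 i]
  · rw [min_eq_left h.le]
    have hKd : K < d := by omega
    set μ := lam ⟨K, hKd⟩ with hμ
    have hμneg : μ < 0 := hneg ⟨K, hKd⟩ h
    set sK := Finset.univ.filter (fun i : Fin d => (i : ℕ) < K) with hsK
    set sl := Finset.univ.filter (fun i : Fin d => (i : ℕ) < l) with hsl
    have hsub : sK ⊆ sl := by
      intro i hi
      simp only [hsK, hsl, Finset.mem_filter, Finset.mem_univ, true_and] at hi ⊢
      omega
    have hsplit : ∑ i ∈ sl, lam i * t i = ∑ i ∈ sK, lam i * t i + ∑ i ∈ sl \ sK, lam i * t i := by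
      rw [add_comm, Finset.sum_sdiff hsub]
    have hsplitt : ∑ i ∈ sK, t i + ∑ i ∈ sl \ sK, t i = ∑ i ∈ sl, t i := by
      rw [add_comm, Finset.sum_sdiff hsub]
    have hA : ∑ i ∈ sK, (lam i + μ * (t i - 1)) ≤ ∑ i ∈ sK, lam i * t i := by
      apply Finset.sum_le_sum
      intro i hi
      simp only [hsK, Finset.mem_filter, Finset.mem_univ, true_and] at hi
      have hle : lam i ≤ μ := hmono (show i ≤ (⟨K, hKd⟩ : Fin d) from le_of_lt hi)
      nlinarith [ht1 i]
    have hB : ∑ i ∈ sl \ sK, μ * t i ≤ ∑ i ∈ sl \ sK, lam i * t i := by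
      apply Finset.sum_le_sum
      intro i hi
      simp only [hsK, hsl, Finset.mem_sdiff, Finset.mem_filter, Finset.mem_univ, true_and,
        not_lt] at hi
      have hle : μ ≤ lam i := hmono (show (⟨K, hKd⟩ : Fin d) ≤ i from hi.2)
      exact mul_le_mul_of_nonneg_right hle (ht0 i)
    have e1 : ∑ i ∈ sK, (lam i + μ * (t i - 1))
        = ∑ i ∈ sK, lam i + μ * (∑ i ∈ sK, t i - K) := by
      rw [Finset.sum_add_distrib, ← Finset.mul_sum, Finset.sum_sub_distrib, Finset.sum_const,
        hsK, card_filter_lt' hKd.le]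
      simp
    have e2 : ∑ i ∈ sl \ sK, μ * t i = μ * ∑ i ∈ sl \ sK, t i := by
      rw [Finset.mul_sum]
    have h6 : ∑ i ∈ sl, t i ≤ K := by
      refine le_trans ?_ htK
      apply Finset.sum_le_sum_of_subset_of_nonneg (Finset.filter_subset _ _)
      intro i _ _
      exact ht0 i
    have h7 : 0 ≤ μ * (∑ i ∈ sK, t i - K) + μ * (∑ i ∈ sl \ sK, t i) := by
      nlinarith
    linarith [hA, hB, e1, e2, hsplit]


lemma sum_fin_ite {a m : ℕ} (hma : m ≤ a) (g : ℕ → ℝ) :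
    ∑ k : Fin a, (if (k : ℕ) < m then g k else 0) = ∑ n ∈ Finset.range m, g n := by
  rw [Fin.sum_univ_eq_sum_range (fun n => if n < m then g n else 0), ← Finset.sum_filter]
  congr 1
  ext n
  simp only [Finset.mem_filter, Finset.mem_range]
  omega

lemma dot_mulVec_self {a b : ℕ} (A : Matrix (Fin a) (Fin b) ℝ) (x : Fin b → ℝ) :
    (A *ᵥ x) ⬝ᵥ (A *ᵥ x) = x ⬝ᵥ ((Aᵀ * A) *ᵥ x) := by
  rw [← Matrix.mulVec_mulVec, Matrix.dotProduct_mulVec x, Matrix.vecMul_transpose]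

lemma sum_vecMulVec_eq_one {d : ℕ} (v : Fin d → Fin d → ℝ)
    (horth : ∀ i j, v i ⬝ᵥ v j = if i = j then 1 else 0) :
    ∑ i, vecMulVec (v i) (v i) = (1 : Matrix (Fin d) (Fin d) ℝ) := by
  have hV : (Matrix.of v) * (Matrix.of v)ᵀ = 1 := by
    ext i j
    simpa [Matrix.mul_apply, Matrix.one_apply, dotProduct] using horth i j
  have hV2 : (Matrix.of v)ᵀ * (Matrix.of v) = 1 := mul_eq_one_comm.mp hV
  ext j k
  rw [← hV2]
  simp [Matrix.sum_apply, vecMulVec_apply, Matrix.mul_apply, mul_comm]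


noncomputable def W0 (d z m : ℕ) (hmd : m ≤ d) (v : Fin d → Fin d → ℝ) :
    Matrix (Fin d) (Fin z) ℝ :=
  Matrix.of fun j k => if h : (k : ℕ) < m then v ⟨k, lt_of_lt_of_le h hmd⟩ j else 0

section
variable {d z m : ℕ}

lemma W0_vec (hmd : m ≤ d) (hmz : m ≤ z) (v : Fin d → Fin d → ℝ)
    (horth : ∀ i j, v i ⬝ᵥ v j = if i = j then 1 else 0) (i : Fin d) :
    ((W0 d z m hmd v)ᵀ *ᵥ v i) ⬝ᵥ ((W0 d z m hmd v)ᵀ *ᵥ v i)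
      = if (i : ℕ) < m then 1 else 0 := by
  have hvec : ∀ k : Fin z, ((W0 d z m hmd v)ᵀ *ᵥ v i) k
      = if h : (k : ℕ) < m then
          (if (⟨k, lt_of_lt_of_le h hmd⟩ : Fin d) = i then (1:ℝ) else 0) else 0 := by
    intro k
    by_cases hk : (k : ℕ) < m
    · simp only [mulVec, dotProduct, transpose_apply, W0, Matrix.of_apply, dif_pos hk]
      exact horth _ i
    · simp [mulVec, dotProduct, W0, hk]
  rw [dotProduct]
  simp only [hvec]
  by_cases him : (i : ℕ) < m
  · rw [if_pos him]
    rw [Finset.sum_eq_single (⟨(i : ℕ), lt_of_lt_of_le him hmz⟩ : Fin z)]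
    · simp [him]
    · intro k _ hk
      by_cases hkm : (k : ℕ) < m
      · rw [dif_pos hkm, if_neg, mul_zero]
        intro hEq
        apply hk
        have h3 : (k : ℕ) = (i : ℕ) := by
          have h4 := congrArg Fin.val hEq
          simpa using h4
        exact Fin.ext (by simpa using h3)
      · rw [dif_neg hkm, mul_zero]
    · intro h; exact absurd (Finset.mem_univ _) h
  · rw [if_neg him]
    apply Finset.sum_eq_zero
    intro k _
    by_cases hkm : (k : ℕ) < m
    · rw [dif_pos hkm, if_neg, mul_zero]
      intro hEq
      have : (k : ℕ) = (i : ℕ) := congrArg Fin.val hEq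
      omega
    · rw [dif_neg hkm, mul_zero]

lemma W0_mul_transpose (hmd : m ≤ d) (hmz : m ≤ z) (v : Fin d → Fin d → ℝ) :
    (W0 d z m hmd v) * (W0 d z m hmd v)ᵀ
      = ∑ i ∈ Finset.univ.filter (fun i : Fin d => (i : ℕ) < m), vecMulVec (v i) (v i) := by
  ext j j'
  set g : ℕ → ℝ := fun n => if h : n < d then v ⟨n, h⟩ j * v ⟨n, h⟩ j' else 0 with hg
  have left : ((W0 d z m hmd v) * (W0 d z m hmd v)ᵀ) j j'
      = ∑ k : Fin z, (if (k : ℕ) < m then g k else 0) := by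
    simp only [Matrix.mul_apply, transpose_apply, W0, Matrix.of_apply]
    refine Finset.sum_congr rfl fun k _ => ?_
    by_cases hk : (k : ℕ) < m
    · rw [dif_pos hk, dif_pos hk, if_pos hk, hg]
      simp only [dif_pos (lt_of_lt_of_le hk hmd)]
    · rw [dif_neg hk, if_neg hk, zero_mul]
  have right : (∑ i ∈ Finset.univ.filter (fun i : Fin d => (i : ℕ) < m),
        vecMulVec (v i) (v i)) j j'
      = ∑ i : Fin d, (if (i : ℕ) < m then g i else 0) := by
    rw [Matrix.sum_apply, Finset.sum_filter]
    refine Finset.sum_congr rfl fun i _ => ?_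
    by_cases hi : (i : ℕ) < m
    · rw [if_pos hi, if_pos hi, vecMulVec_apply, hg]
      simp only [dif_pos i.isLt, Fin.eta]
    · rw [if_neg hi, if_neg hi]
  rw [left, right, sum_fin_ite hmz g, sum_fin_ite hmd g]

lemma W0_norm_aux (hmd : m ≤ d) (v : Fin d → Fin d → ℝ)
    (horth : ∀ i j, v i ⬝ᵥ v j = if i = j then 1 else 0) (x : Fin z → ℝ) :
    ((W0 d z m hmd v) *ᵥ x) ⬝ᵥ ((W0 d z m hmd v) *ᵥ x) ≤ x ⬝ᵥ x := by
  rw [dot_mulVec_self]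
  have hM : (W0 d z m hmd v)ᵀ * (W0 d z m hmd v)
      = Matrix.of (fun k k' : Fin z => if (k : ℕ) < m ∧ k = k' then (1:ℝ) else 0) := by
    ext k k'
    simp only [Matrix.mul_apply, transpose_apply, W0, Matrix.of_apply]
    by_cases hk : (k : ℕ) < m
    · by_cases hk' : (k' : ℕ) < m
      · simp only [dif_pos hk, dif_pos hk']
        have h2 := horth ⟨k, lt_of_lt_of_le hk hmd⟩ ⟨k', lt_of_lt_of_le hk' hmd⟩
        rw [dotProduct] at h2
        rw [h2]
        have : ((⟨k, lt_of_lt_of_le hk hmd⟩ : Fin d) = ⟨k', lt_of_lt_of_le hk' hmd⟩) ↔ k = k' := by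
          rw [Fin.mk.injEq]
          exact ⟨fun h => Fin.ext h, fun h => congrArg Fin.val h⟩
        simp [this, hk]
      · have : ∀ j, (if h : (k : ℕ) < m then v ⟨k, lt_of_lt_of_le h hmd⟩ j else 0)
            * (if h : (k' : ℕ) < m then v ⟨k', lt_of_lt_of_le h hmd⟩ j else 0) = 0 := by
          intro j; rw [dif_neg hk', mul_zero]
        rw [Finset.sum_congr rfl fun j _ => this j, Finset.sum_const, smul_zero]
        rw [if_neg]
        rintro ⟨-, rfl⟩
        exact hk' hk
    · have : ∀ j, (if h : (k : ℕ) < m then v ⟨k, lt_of_lt_of_le h hmd⟩ j else 0)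
          * (if h : (k' : ℕ) < m then v ⟨k', lt_of_lt_of_le h hmd⟩ j else 0) = 0 := by
        intro j; rw [dif_neg hk, zero_mul]
      rw [Finset.sum_congr rfl fun j _ => this j, Finset.sum_const, smul_zero]
      rw [if_neg]
      rintro ⟨h1, -⟩
      exact hk h1
  rw [hM, dotProduct, dotProduct]
  apply Finset.sum_le_sum
  intro k _
  have hcol : (Matrix.of (fun k k' : Fin z => if (k : ℕ) < m ∧ k = k' then (1:ℝ) else 0) *ᵥ x) k
      = if (k : ℕ) < m then x k else 0 := by
    simp only [mulVec, dotProduct, Matrix.of_apply]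
    by_cases hk : (k : ℕ) < m
    · rw [if_pos hk]
      rw [Finset.sum_eq_single k]
      · simp [hk]
      · intro k' _ hkk
        rw [if_neg, zero_mul]
        rintro ⟨-, rfl⟩
        exact hkk rfl
      · intro h; exact absurd (Finset.mem_univ _) h
    · rw [if_neg hk]
      apply Finset.sum_eq_zero
      intro k' _
      rw [if_neg, zero_mul]
      rintro ⟨h1, -⟩
      exact hk h1
  rw [hcol]
  by_cases hk : (k : ℕ) < m
  · rw [if_pos hk]
  · rw [if_neg hk, mul_zero]
    exact mul_self_nonneg _

end

/-- For symmetric `C` with eigendecomposition `C = Σ λᵢ vᵢvᵢᵀ`, `λ` nondecreasing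
with `l` strictly negative eigenvalues, the minimum of `Tr(Wᵀ C W)` over operator
norm `‖W‖₂ ≤ 1` equals `Σ_{i<m} λᵢ` with `m = min{d,z,l}`, attained at `W` with
`WWᵀ = Σ_{i<m} vᵢvᵢᵀ`. -/
theorem stmt4 {d z : ℕ} (C : Matrix (Fin d) (Fin d) ℝ)
    (lam : Fin d → ℝ) (hmono : Monotone lam)
    (v : Fin d → Fin d → ℝ) (horth : ∀ i j, v i ⬝ᵥ v j = if i = j then 1 else 0)
    (hC : C = ∑ i, lam i • vecMulVec (v i) (v i))
    (l : ℕ) (hl : l = (Finset.univ.filter fun i : Fin d => lam i < 0).card)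
    (hlpos : 0 < l)
    (m : ℕ) (hm : m = min (min d z) l) :
    IsLeast {r : ℝ | ∃ W : Matrix (Fin d) (Fin z) ℝ,
        ‖W‖ ≤ 1 ∧ r = Matrix.trace (Wᵀ * C * W)}
      (∑ i ∈ Finset.univ.filter (fun i : Fin d => (i : ℕ) < m), lam i) ∧
    ∃ W : Matrix (Fin d) (Fin z) ℝ, ‖W‖ ≤ 1 ∧
      W * Wᵀ = ∑ i ∈ Finset.univ.filter (fun i : Fin d => (i : ℕ) < m),
          vecMulVec (v i) (v i) ∧
      Matrix.trace (Wᵀ * C * W) =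
        ∑ i ∈ Finset.univ.filter (fun i : Fin d => (i : ℕ) < m), lam i := by
  obtain ⟨hneg, hpos⟩ := negpos lam hmono hl
  have hld : l ≤ d := by
    rw [hl]
    calc (Finset.univ.filter fun i : Fin d => lam i < 0).card
        ≤ (Finset.univ : Finset (Fin d)).card := Finset.card_filter_le _ _
      _ = d := by simp
  have hmd : m ≤ d := by omega
  have hmz : m ≤ z := by omega
  have hvI := sum_vecMulVec_eq_one v horth
  have htr : ∀ W : Matrix (Fin d) (Fin z) ℝ,
      Matrix.trace (Wᵀ * C * W) = ∑ i, lam i * ((Wᵀ *ᵥ v i) ⬝ᵥ (Wᵀ *ᵥ v i)) := by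
    intro W
    rw [hC, Matrix.mul_sum, Matrix.sum_mul, Matrix.trace_sum]
    refine Finset.sum_congr rfl fun i _ => ?_
    rw [Matrix.mul_smul, Matrix.smul_mul, Matrix.trace_smul, trace_sandwich, smul_eq_mul]
  have hlow : ∀ W : Matrix (Fin d) (Fin z) ℝ, ‖W‖ ≤ 1 →
      (∑ i ∈ Finset.univ.filter (fun i : Fin d => (i : ℕ) < m), lam i)
        ≤ Matrix.trace (Wᵀ * C * W) := by
    intro W hW
    rw [htr W]
    have hWT : ‖Wᵀ‖ ≤ 1 := by rw [norm_transpose]; exact hW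
    set t : Fin d → ℝ := fun i => (Wᵀ *ᵥ v i) ⬝ᵥ (Wᵀ *ᵥ v i) with htdef
    have ht0 : ∀ i, 0 ≤ t i := fun i => dot_self_nonneg _
    have ht1 : ∀ i, t i ≤ 1 := by
      intro i
      have h2 := mulVec_dot_le Wᵀ hWT (v i)
      rwa [horth i i, if_pos rfl] at h2
    have htsum : ∑ i, t i = Matrix.trace (Wᵀ * W) := by
      have h1 : ∀ i : Fin d, t i = Matrix.trace (Wᵀ * vecMulVec (v i) (v i) * W) :=
        fun i => (trace_sandwich W (v i)).symm
      rw [Finset.sum_congr rfl fun i _ => h1 i, ← Matrix.trace_sum, ← Matrix.sum_mul,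
        ← Matrix.mul_sum, hvI, Matrix.mul_one]
    have htz : Matrix.trace (Wᵀ * W) ≤ (z : ℝ) := by
      have hcol : Matrix.trace (Wᵀ * W)
          = ∑ k : Fin z, (W *ᵥ Pi.single k 1) ⬝ᵥ (W *ᵥ Pi.single k 1) := by
        simp [Matrix.trace, Matrix.diag, Matrix.mul_apply, Matrix.mulVec_single, dotProduct]
      rw [hcol]
      calc ∑ k : Fin z, (W *ᵥ Pi.single k 1) ⬝ᵥ (W *ᵥ Pi.single k 1)
          ≤ ∑ _k : Fin z, (1 : ℝ) := by
            apply Finset.sum_le_sum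
            intro k _
            have h2 := mulVec_dot_le W hW (Pi.single k 1)
            rwa [show (Pi.single k 1 : Fin z → ℝ) ⬝ᵥ Pi.single k 1 = 1 from by
              simp [dotProduct_single]] at h2
        _ = z := by simp
    have htd : ∑ i, t i ≤ (d : ℝ) := by
      calc ∑ i, t i ≤ ∑ _i : Fin d, (1 : ℝ) := Finset.sum_le_sum fun i _ => ht1 i
        _ = d := by simp
    have htK : ∑ i, t i ≤ ((min d z : ℕ) : ℝ) := by
      rw [Nat.cast_min]
      exact le_min htd (htsum ▸ htz)
    exact key lam t hmono ht0 ht1 (min d z) l m hld htK hneg hpos (by omega)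
  set W₀ := W0 d z m hmd v with hW₀
  have hWnorm : ‖W₀‖ ≤ 1 := norm_le_one_of _ (W0_norm_aux hmd v horth)
  have hWt : Matrix.trace (W₀ᵀ * C * W₀)
      = ∑ i ∈ Finset.univ.filter (fun i : Fin d => (i : ℕ) < m), lam i := by
    rw [htr W₀]
    rw [Finset.sum_congr rfl (fun i _ => by rw [W0_vec hmd hmz v horth i])]
    rw [Finset.sum_filter]
    exact Finset.sum_congr rfl fun i _ => by split_ifs <;> simp
  exact ⟨⟨⟨W₀, hWnorm, hWt.symm⟩, fun r hr => by
      obtain ⟨W, hW, rfl⟩ := hr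
      exact hlow W hW⟩,
    W₀, hWnorm, W0_mul_transpose hmd hmz v, hWt⟩
end

section
/- Let W₁ ∈ ℝ^{h×d}, W₂ ∈ ℝ^{h×z} with h ≥ max(d,z). If ‖W₁^⊤W₂‖₂ ≤ 1, then there exist matrices Ŵ₁ ∈ ℝ^{h×d} and Ŵ₂ ∈ ℝ^{h×z} with ‖Ŵ₁‖₂ ≤ 1 and ‖Ŵ₂‖₂ ≤ 1 such that Ŵ₁^⊤Ŵ₂ = W₁^⊤W₂. Conversely if ‖W₁‖₂ ≤ 1 and ‖W₂‖₂ ≤ 1 then ‖W₁^⊤W₂‖₂ ≤ 1. -/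
open Matrix
open scoped Matrix.Norms.L2Operator

lemma my_norm_one_le {n : ℕ} : ‖(1 : Matrix (Fin n) (Fin n) ℝ)‖ ≤ 1 := by
  rw [Matrix.cstar_norm_def, _root_.map_one]
  exact ContinuousLinearMap.norm_id_le

lemma my_pad_mul {h d : ℕ} (hd : d ≤ h) :
    (Matrix.of (fun (i : Fin h) (j : Fin d) => if (i : ℕ) = (j : ℕ) then (1:ℝ) else 0))ᵀ *
      (Matrix.of (fun (i : Fin h) (j : Fin d) => if (i : ℕ) = (j : ℕ) then (1:ℝ) else 0)) = 1 := by
  ext i j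
  simp only [Matrix.mul_apply, Matrix.transpose_apply, Matrix.of_apply]
  rw [Finset.sum_eq_single (Fin.castLE hd i)]
  · simp [Matrix.one_apply, Fin.ext_iff, eq_comm]
  · intro k _ hk
    have : ¬ ((k : ℕ) = (i : ℕ)) := by
      intro hki
      exact hk (Fin.ext (by simpa using hki))
    simp [this]
  · simp

/-- Operator-norm constraints on factors versus on the product: if
`‖W₁ᵀW₂‖₂ ≤ 1` the product can be re-factorized with `‖Ŵᵢ‖₂ ≤ 1`, and
conversely `‖W₁‖₂ ≤ 1, ‖W₂‖₂ ≤ 1` imply `‖W₁ᵀW₂‖₂ ≤ 1`. -/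
theorem stmt6 {h d z : ℕ} (hd : d ≤ h) (hz : z ≤ h)
    (W₁ : Matrix (Fin h) (Fin d) ℝ) (W₂ : Matrix (Fin h) (Fin z) ℝ) :
    (‖W₁ᵀ * W₂‖ ≤ 1 →
      ∃ (V₁ : Matrix (Fin h) (Fin d) ℝ) (V₂ : Matrix (Fin h) (Fin z) ℝ),
        ‖V₁‖ ≤ 1 ∧ ‖V₂‖ ≤ 1 ∧ V₁ᵀ * V₂ = W₁ᵀ * W₂) ∧
    (‖W₁‖ ≤ 1 → ‖W₂‖ ≤ 1 → ‖W₁ᵀ * W₂‖ ≤ 1) := by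
  have hT : ∀ {m n : ℕ} (A : Matrix (Fin m) (Fin n) ℝ), Aᴴ = Aᵀ := by
    intro m n A; ext i j; simp [Matrix.conjTranspose_apply]
  constructor
  · intro hle
    set E : Matrix (Fin h) (Fin d) ℝ :=
      Matrix.of (fun (i : Fin h) (j : Fin d) => if (i : ℕ) = (j : ℕ) then (1:ℝ) else 0) with hE
    have hEE : Eᵀ * E = 1 := my_pad_mul hd
    have hEnorm : ‖E‖ ≤ 1 := by
      have h1 : ‖Eᴴ * E‖ = ‖E‖ * ‖E‖ := Matrix.l2_opNorm_conjTranspose_mul_self E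
      rw [hT, hEE] at h1
      nlinarith [my_norm_one_le (n := d), norm_nonneg E,
        norm_nonneg (1 : Matrix (Fin d) (Fin d) ℝ)]
    refine ⟨E, E * (W₁ᵀ * W₂), hEnorm, ?_, by rw [← Matrix.mul_assoc, hEE, Matrix.one_mul]⟩
    calc ‖E * (W₁ᵀ * W₂)‖ ≤ ‖E‖ * ‖W₁ᵀ * W₂‖ := Matrix.l2_opNorm_mul _ _
      _ ≤ 1 * 1 := by
          apply mul_le_mul hEnorm hle (norm_nonneg _) (le_trans (norm_nonneg _) hEnorm)
      _ = 1 := by ring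
  · intro h1 h2
    calc ‖W₁ᵀ * W₂‖ ≤ ‖W₁ᵀ‖ * ‖W₂‖ := Matrix.l2_opNorm_mul _ _
      _ ≤ 1 * 1 := by
          rw [← hT, Matrix.l2_opNorm_conjTranspose]
          exact mul_le_mul h1 h2 (norm_nonneg _) zero_le_one
      _ = 1 := by ring
end

section
/- Consider the loss L(W₁,W₂) = Tr(W₂^⊤W₁CW₁^⊤W₂) with W₁ ∈ ℝ^{h×d}, W₂ ∈ ℝ^{h×z} satisfying W₁^⊤W₁ = I_d, W₂^⊤W₂ = I_z, and symmetric C = VΛV^⊤ ∈ ℝ^{d×d}. Under the Grassmannian gradient flow Ẇ₂ = −2(I − W₂W₂^⊤)W₁CW₁^⊤W₂ and Ẇ₁ = −2(I − W₁W₁^⊤)W₂W₂^⊤W₁C, the matrix q(t) ∈ ℝ^{d×z} with rows qᵢ = W₂^⊤W₁vᵢ (the outputs on the eigenvectors vᵢ of C) satisfies the closed differential equation q̇ = −2[2Λq − Λqq^⊤q − qq^⊤Λq]. -/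
set_option maxHeartbeats 1000000


open Matrix

private lemma deriv_entry {h d z : ℕ} (V : Matrix (Fin d) (Fin d) ℝ)
    (W₁ : ℝ → Matrix (Fin h) (Fin d) ℝ) (W₂ : ℝ → Matrix (Fin h) (Fin z) ℝ)
    (A : Matrix (Fin h) (Fin d) ℝ) (B : Matrix (Fin h) (Fin z) ℝ) (t : ℝ)
    (h1 : ∀ i j, HasDerivAt (fun s => W₁ s i j) (A i j) t)
    (h2 : ∀ i j, HasDerivAt (fun s => W₂ s i j) (B i j) t)
    (i : Fin d) (j : Fin z) :
    HasDerivAt (fun s => (Vᵀ * (W₁ s)ᵀ * W₂ s) i j)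
      ((Vᵀ * Aᵀ * W₂ t + Vᵀ * (W₁ t)ᵀ * B) i j) t := by
  simp only [Matrix.mul_apply, Matrix.transpose_apply, Matrix.add_apply,
    ← Finset.sum_add_distrib]
  apply HasDerivAt.fun_sum
  intro k _
  have hd1 : HasDerivAt (fun s => ∑ m, V m i * W₁ s k m)
      (∑ m, V m i * A k m) t := by
    apply HasDerivAt.fun_sum
    intro m _
    exact (h1 k m).const_mul (V m i)
  exact hd1.mul (h2 k j)

/-- Learning dynamics of linear SSL on the Grassmannian: under the projected
gradient flows for `W₁, W₂` with orthogonality constraints and `C = VΛVᵀ`, the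
output matrix `q(t) = Vᵀ W₁(t)ᵀ W₂(t)` (rows `qᵢ = W₂ᵀW₁vᵢ`) satisfies
`q̇ = −2[2Λq − Λq qᵀq − q qᵀΛq]`. -/
theorem stmt13 {h d z : ℕ}
    (W₁ : ℝ → Matrix (Fin h) (Fin d) ℝ) (W₂ : ℝ → Matrix (Fin h) (Fin z) ℝ)
    (C V Λ : Matrix (Fin d) (Fin d) ℝ) (lam : Fin d → ℝ)
    (hΛ : Λ = Matrix.diagonal lam) (hV : Vᵀ * V = 1) (hVV : V * Vᵀ = 1)
    (hC : C = V * Λ * Vᵀ)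
    (horth1 : ∀ t, (W₁ t)ᵀ * W₁ t = 1) (horth2 : ∀ t, (W₂ t)ᵀ * W₂ t = 1)
    (hflow1 : ∀ t i j, HasDerivAt (fun s => W₁ s i j)
      ((((-2 : ℝ) • ((1 - W₁ t * (W₁ t)ᵀ) * (W₂ t * (W₂ t)ᵀ * W₁ t * C)) : Matrix (Fin h) (Fin d) ℝ)) i j) t)
    (hflow2 : ∀ t i j, HasDerivAt (fun s => W₂ s i j)
      ((((-2 : ℝ) • ((1 - W₂ t * (W₂ t)ᵀ) * (W₁ t * C * (W₁ t)ᵀ * W₂ t)) : Matrix (Fin h) (Fin z) ℝ)) i j) t) :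
    ∀ t i j, HasDerivAt (fun s => (Vᵀ * (W₁ s)ᵀ * W₂ s) i j)
      (((-2 : ℝ) • ((2 : ℝ) • (Λ * (Vᵀ * (W₁ t)ᵀ * W₂ t))
        - Λ * (Vᵀ * (W₁ t)ᵀ * W₂ t) * (Vᵀ * (W₁ t)ᵀ * W₂ t)ᵀ * (Vᵀ * (W₁ t)ᵀ * W₂ t)
        - (Vᵀ * (W₁ t)ᵀ * W₂ t) * (Vᵀ * (W₁ t)ᵀ * W₂ t)ᵀ
            * (Λ * (Vᵀ * (W₁ t)ᵀ * W₂ t))) : Matrix (Fin d) (Fin z) ℝ) i j) t := by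
  intro t i j
  have key := deriv_entry V W₁ W₂ _ _ t (hflow1 t) (hflow2 t) i j
  set A := W₁ t with hA
  set B := W₂ t with hB
  have hVX : ∀ (n : ℕ) (X : Matrix (Fin d) (Fin n) ℝ), Vᵀ * (V * X) = X := fun n X => by
    rw [← Matrix.mul_assoc, hV, Matrix.one_mul]
  have hVX' : ∀ (n : ℕ) (X : Matrix (Fin d) (Fin n) ℝ), V * (Vᵀ * X) = X := fun n X => by
    rw [← Matrix.mul_assoc, hVV, Matrix.one_mul]
  have h1X : ∀ (n : ℕ) (X : Matrix (Fin d) (Fin n) ℝ), Aᵀ * (A * X) = X := fun n X => by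
    rw [← Matrix.mul_assoc, horth1 t, Matrix.one_mul]
  have h2X : ∀ (n : ℕ) (X : Matrix (Fin z) (Fin n) ℝ), Bᵀ * (B * X) = X := fun n X => by
    rw [← Matrix.mul_assoc, horth2 t, Matrix.one_mul]
  have hq : Vᵀ * (((-2 : ℝ) • ((1 - A * Aᵀ) * (B * Bᵀ * A * C)) : Matrix (Fin h) (Fin d) ℝ))ᵀ * B
      + Vᵀ * Aᵀ * (((-2 : ℝ) • ((1 - B * Bᵀ) * (A * C * Aᵀ * B)) : Matrix (Fin h) (Fin z) ℝ))
      = (((-2 : ℝ) • ((2 : ℝ) • (Λ * (Vᵀ * Aᵀ * B))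
        - Λ * (Vᵀ * Aᵀ * B) * (Vᵀ * Aᵀ * B)ᵀ * (Vᵀ * Aᵀ * B)
        - (Vᵀ * Aᵀ * B) * (Vᵀ * Aᵀ * B)ᵀ * (Λ * (Vᵀ * Aᵀ * B))) : Matrix (Fin d) (Fin z) ℝ)) := by
    subst hC hΛ
    simp only [Matrix.transpose_smul, Matrix.transpose_mul, Matrix.transpose_sub,
      Matrix.transpose_one, Matrix.transpose_transpose, Matrix.diagonal_transpose,
      Matrix.sub_mul, Matrix.mul_sub, Matrix.one_mul, Matrix.mul_one,
      Matrix.smul_mul, Matrix.mul_smul, Matrix.mul_assoc, hVX, hVX', h1X, h2X,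
      smul_sub, smul_smul, two_smul, (show Bᵀ * B = 1 from horth2 t)]
    module
  rw [hq] at key
  exact key
end

section
/- Let Λ = diag(λ₁,...,λ_d) with λ₁ < 0 the smallest eigenvalue and e₁ the corresponding standard basis vector, and let q : ℝ → ℝ^d solve q̇/2 = −(1 − q^⊤q)Λq − (I − qq^⊤)Λq with ‖q(t)‖ ≤ 1 for all t. Then d(e₁^⊤q)/dt = 2[(1 − q^⊤q)(−λ₁) + (q^⊤Λq − λ₁)]·(e₁^⊤q), and the right-hand side is nonnegative whenever e₁^⊤q ≥ 0; it vanishes only when q = ±e₁ (given e₁^⊤q ≠ 0). -/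
/-- For the `z = 1` SSL dynamics with `λ₀ < 0` the smallest eigenvalue:
`d(e₁ᵀq)/dt = 2[(1−qᵀq)(−λ₀) + (qᵀΛq − λ₀)]·(e₁ᵀq)`, the rate is nonnegative
whenever `e₁ᵀq ≥ 0`, and it vanishes (given `e₁ᵀq ≠ 0`) only when `q = ±e₁`. -/
theorem stmt15 {d : ℕ} [NeZero d] (lam : Fin d → ℝ)
    (hneg : lam 0 < 0) (hmin : ∀ i, i ≠ 0 → lam 0 < lam i)
    (q : ℝ → Fin d → ℝ) (hnorm : ∀ t, ∑ i, (q t i) ^ 2 ≤ 1)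
    (hode : ∀ t i, HasDerivAt (fun s => q s i)
      (2 * (-(1 - ∑ j, (q t j) ^ 2) * (lam i * q t i)
        - (lam i * q t i - q t i * ∑ j, lam j * (q t j) ^ 2))) t) :
    (∀ t, HasDerivAt (fun s => q s 0)
        (2 * ((1 - ∑ i, (q t i) ^ 2) * (-lam 0)
          + ((∑ i, lam i * (q t i) ^ 2) - lam 0)) * q t 0) t) ∧
    (∀ t, 0 ≤ q t 0 →
      0 ≤ 2 * ((1 - ∑ i, (q t i) ^ 2) * (-lam 0)
          + ((∑ i, lam i * (q t i) ^ 2) - lam 0)) * q t 0) ∧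
    (∀ t, q t 0 ≠ 0 →
      2 * ((1 - ∑ i, (q t i) ^ 2) * (-lam 0)
          + ((∑ i, lam i * (q t i) ^ 2) - lam 0)) * q t 0 = 0 →
      q t = Pi.single 0 1 ∨ q t = -Pi.single 0 1) := by
  -- key inequality: T - lam 0 ≥ ∑ (lam i - lam 0) (q t i)^2 ≥ 0
  have hT : ∀ t, 0 ≤ (∑ i, lam i * (q t i) ^ 2) - lam 0 := by
    intro t
    have h1 : (∑ i, lam i * (q t i) ^ 2) - lam 0 * ∑ i, (q t i) ^ 2
        = ∑ i, (lam i - lam 0) * (q t i) ^ 2 := by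
      rw [Finset.mul_sum, ← Finset.sum_sub_distrib]
      exact Finset.sum_congr rfl fun i _ => by ring
    have h2 : 0 ≤ ∑ i, (lam i - lam 0) * (q t i) ^ 2 := by
      apply Finset.sum_nonneg
      intro i _
      rcases eq_or_ne i 0 with h | h
      · simp [h]
      · exact mul_nonneg (by linarith [hmin i h]) (sq_nonneg _)
    have h3 : lam 0 ≤ lam 0 * ∑ i, (q t i) ^ 2 := by
      nlinarith [hnorm t]
    linarith
  have hS : ∀ t, 0 ≤ 1 - ∑ i, (q t i) ^ 2 := fun t => by linarith [hnorm t]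
  refine ⟨fun t => ?_, fun t h0 => ?_, fun t h0 hz => ?_⟩
  · have := hode t 0
    convert this using 1
    ring
  · apply mul_nonneg _ h0
    have := hT t; have := hS t
    nlinarith
  · -- bracket must be zero
    have hb : (1 - ∑ i, (q t i) ^ 2) * (-lam 0)
          + ((∑ i, lam i * (q t i) ^ 2) - lam 0) = 0 := by
      rcases mul_eq_zero.mp hz with h | h
      · rcases mul_eq_zero.mp h with h | h
        · norm_num at h
        · exact h
      · exact absurd h h0
    have h1 : (1 - ∑ i, (q t i) ^ 2) * (-lam 0) = 0 ∧
        (∑ i, lam i * (q t i) ^ 2) - lam 0 = 0 := by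
      constructor <;> nlinarith [hT t, hS t, mul_nonneg (hS t) (le_of_lt (neg_pos.mpr hneg))]
    have hS1 : ∑ i, (q t i) ^ 2 = 1 := by
      have := h1.1
      have hl : -lam 0 ≠ 0 := by linarith
      have := mul_eq_zero.mp this
      rcases this with h | h
      · linarith
      · exact absurd h hl
    -- then ∑ (lam i - lam 0) qi^2 = 0, each term nonneg, so q t i = 0 for i ≠ 0
    have hsum0 : ∑ i, (lam i - lam 0) * (q t i) ^ 2 = 0 := by
      have h1' : (∑ i, lam i * (q t i) ^ 2) - lam 0 * ∑ i, (q t i) ^ 2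
          = ∑ i, (lam i - lam 0) * (q t i) ^ 2 := by
        rw [Finset.mul_sum, ← Finset.sum_sub_distrib]
        exact Finset.sum_congr rfl fun i _ => by ring
      rw [hS1] at h1'
      have := h1.2
      linarith
    have hzero : ∀ i, i ≠ 0 → q t i = 0 := by
      intro i hi
      have hall := (Finset.sum_eq_zero_iff_of_nonneg (fun j _ => by
        rcases eq_or_ne j 0 with h | h
        · simp [h]
        · exact mul_nonneg (by linarith [hmin j h]) (sq_nonneg _))).mp hsum0
      have := hall i (Finset.mem_univ i)
      have hlt := hmin i hi
      have : (q t i) ^ 2 = 0 := by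
        rcases mul_eq_zero.mp this with h | h
        · linarith
        · exact h
      exact pow_eq_zero_iff (n := 2) (by norm_num) |>.mp this
    have hq0 : (q t 0) ^ 2 = 1 := by
      have : ∑ i, (q t i) ^ 2 = (q t 0) ^ 2 := by
        rw [Finset.sum_eq_single 0]
        · intro b _ hb; rw [hzero b hb]; ring
        · intro h; exact absurd (Finset.mem_univ 0) h
      rw [this] at hS1; exact hS1
    have hfac : (q t 0 - 1) * (q t 0 + 1) = 0 := by nlinarith
    have hcases : q t 0 = 1 ∨ q t 0 = -1 := by
      rcases mul_eq_zero.mp hfac with h | h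
      · left; linarith
      · right; linarith
    rcases hcases with h | h
    · left; funext i
      rcases eq_or_ne i 0 with hi | hi
      · subst hi; simp [h]
      · simp [hzero i hi, Pi.single_eq_of_ne hi]
    · right; funext i
      rcases eq_or_ne i 0 with hi | hi
      · subst hi; simp [h]
      · simp [hzero i hi, Pi.single_eq_of_ne hi]
end
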